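/- For all integers n ≥ 1 and 1 ≤ h ≤ n, the number of fixed-point-free involutions τ of V_n such that γ_n∘τ has exactly 2h orbits (i.e., the number of multichromosomal signed circular genomes on n genes with exactly h chromosomes) equals 2^{n-h} times the number of permutations of an n-element set with exactly h orbits (the unsigned Stirling number of the first kind). -/

import Mathlib

/-- The total number of orbits of a permutation of a finite type
(fixed points count as orbits of size 1). -/
noncomputable def orbTotal {α : Type*} [Fintype α] (π : Equiv.Perm α) : ℕ :=
  Nat.card (MulAction.orbitRel.Quotient (Subgroup.zpowers π) α)

/-- The `2n` gene extremities: `(i, false)` is the tail of gene `i`, `(i, true)` its head. -/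
abbrev GVert (n : ℕ) := Fin n × Bool

/-- The gene-edge involution `γₙ`, pairing the tail `(i, false)` with the head `(i, true)`. -/
def gammaPerm (n : ℕ) : Equiv.Perm (GVert n) :=
  Equiv.prodCongr (Equiv.refl (Fin n)) ⟨Bool.not, Bool.not, Bool.not_not, Bool.not_not⟩

/-- A multichromosomal signed circular genome on `n` genes is identified with a
fixed-point-free involution of the set of gene extremities. -/
def IsGenome {n : ℕ} (τ : Equiv.Perm (GVert n)) : Prop :=
  τ * τ = 1 ∧ ∀ x, τ x ≠ x

open Equiv

namespace Equiv.Perm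

theorem apply_inv_self {α : Type*} (f : Perm α) (x : α) : f (f⁻¹ x) = x :=
  f.apply_symm_apply x

theorem inv_apply_self {α : Type*} (f : Perm α) (x : α) : f⁻¹ (f x) = x :=
  f.symm_apply_apply x

end Equiv.Perm

section General
variable {α β : Type*}

/-- sameCycle setoid -/
def scSetoid (π : Perm α) : Setoid α :=
  ⟨π.SameCycle, fun x => Perm.SameCycle.refl π x, Perm.SameCycle.symm, Perm.SameCycle.trans⟩

lemma orbTotal_eq_card_sc [Fintype α] (π : Perm α) :
    orbTotal π = Nat.card (Quotient (scSetoid π)) := by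
  apply Nat.card_congr
  apply Quotient.congrRight
  intro a b
  rw [MulAction.orbitRel_apply, MulAction.mem_orbit_iff]
  constructor
  · rintro ⟨⟨g, hg⟩, h⟩
    obtain ⟨k, rfl⟩ := Subgroup.mem_zpowers_iff.mp hg
    exact Perm.SameCycle.symm ⟨k, h⟩
  · rintro h
    obtain ⟨k, hk⟩ := h.symm
    exact ⟨⟨π ^ k, Subgroup.zpow_mem _ (Subgroup.mem_zpowers π) k⟩, hk⟩

lemma zpow_comm_apply (σ : Perm β) (π : Perm α) (c : α → β)
    (h : ∀ i, σ (c i) = c (π i)) : ∀ k : ℤ, ∀ i, (σ ^ k) (c i) = c ((π ^ k) i) := by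
  have hinv : ∀ i, σ⁻¹ (c i) = c (π⁻¹ i) := by
    intro i
    have := h (π⁻¹ i)
    rw [Perm.apply_inv_self] at this
    rw [← this, Perm.inv_apply_self]
  intro k
  induction k using Int.induction_on with
  | zero => simp
  | succ k ih =>
      intro i
      have : (k : ℤ) + 1 = k + 1 := rfl
      rw [zpow_add_one, zpow_add_one, Perm.mul_apply, Perm.mul_apply, h, ih]
  | pred k ih =>
      intro i
      rw [zpow_sub_one, zpow_sub_one, Perm.mul_apply, Perm.mul_apply, hinv, ih]

lemma sameCycle_congr (e : α ≃ β) (σ : Perm α) (ρ : Perm β)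
    (h : ∀ x, e (σ x) = ρ (e x)) {x y : α} :
    σ.SameCycle x y ↔ ρ.SameCycle (e x) (e y) := by
  have key := zpow_comm_apply ρ σ (⇑e) (fun i => (h i).symm)
  constructor
  · rintro ⟨k, hk⟩
    exact ⟨k, by rw [key k x, hk]⟩
  · rintro ⟨k, hk⟩
    rw [key k x] at hk
    exact ⟨k, e.injective hk⟩

lemma orbTotal_congr [Fintype α] [Fintype β] (e : α ≃ β) (σ : Perm α) (ρ : Perm β)
    (h : ∀ x, e (σ x) = ρ (e x)) : orbTotal σ = orbTotal ρ := by
  rw [orbTotal_eq_card_sc, orbTotal_eq_card_sc]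
  exact Nat.card_congr (Quotient.congr e (fun a b => sameCycle_congr e σ ρ h))

open scoped Classical in
/-- the minimal representative of the cycle of `i` -/
noncomputable def minRep {n : ℕ} (π : Perm (Fin n)) (i : Fin n) : Fin n :=
  (Finset.univ.filter (π.SameCycle i)).min' ⟨i, by simp [Perm.SameCycle.refl]⟩

lemma sameCycle_minRep {n : ℕ} (π : Perm (Fin n)) (i : Fin n) :
    π.SameCycle i (minRep π i) := by
  classical
  have := (Finset.univ.filter (π.SameCycle i)).min'_mem ⟨i, by simp [Perm.SameCycle.refl]⟩
  simpa [minRep] using this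

lemma minRep_eq_of_sameCycle {n : ℕ} (π : Perm (Fin n)) {i j : Fin n}
    (h : π.SameCycle i j) : minRep π i = minRep π j := by
  classical
  have hset : Finset.univ.filter (π.SameCycle i) = Finset.univ.filter (π.SameCycle j) := by
    ext x
    simp only [Finset.mem_filter, Finset.mem_univ, true_and]
    exact ⟨fun hx => h.symm.trans hx, fun hx => h.trans hx⟩
  simp [minRep, hset]

lemma minRep_idem {n : ℕ} (π : Perm (Fin n)) (i : Fin n) :
    minRep π (minRep π i) = minRep π i := by
  exact (minRep_eq_of_sameCycle π (sameCycle_minRep π i)).symm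

lemma card_minRep_fixed {n : ℕ} [Fintype (Fin n)] (π : Perm (Fin n)) :
    Nat.card {j : Fin n // minRep π j = j} = orbTotal π := by
  rw [orbTotal_eq_card_sc]
  apply Nat.card_congr
  refine ⟨fun j => (Quotient.mk _ j.1 : Quotient (scSetoid π)),
    fun q => Quotient.liftOn q (fun i => ⟨minRep π i, minRep_idem π i⟩)
      (fun a b hab => Subtype.ext (minRep_eq_of_sameCycle π hab)), ?_, ?_⟩
  · rintro ⟨j, hj⟩
    simp only [Quotient.liftOn_mk]
    exact Subtype.ext hj
  · intro q
    induction q using Quotient.ind with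
    | _ i =>
      simp only [Quotient.liftOn_mk]
      exact Quotient.sound ((sameCycle_minRep π i).symm : (scSetoid π).r _ _)

end General

section Genome
variable {n : ℕ}

/-- toggle the boolean coordinate according to `f` -/
def Ff (f : Fin n → Bool) : Perm (GVert n) :=
  ⟨fun x => (x.1, xor x.2 (f x.1)), fun x => (x.1, xor x.2 (f x.1)),
   fun x => by simp [Bool.xor_assoc], fun x => by simp [Bool.xor_assoc]⟩

@[simp] lemma Ff_apply (f : Fin n → Bool) (x : GVert n) : Ff f x = (x.1, xor x.2 (f x.1)) := rfl

@[simp] lemma gammaPerm_apply (x : GVert n) : gammaPerm n x = (x.1, !x.2) := rfl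

/-- base fixed-point-free involution attached to a permutation -/
def tau0 (π : Perm (Fin n)) : Perm (GVert n) :=
  ⟨fun x => cond x.2 (π x.1, false) (π⁻¹ x.1, true),
   fun x => cond x.2 (π x.1, false) (π⁻¹ x.1, true),
   fun x => by rcases x with ⟨i, _ | _⟩ <;> simp,
   fun x => by rcases x with ⟨i, _ | _⟩ <;> simp⟩

@[simp] lemma tau0_apply (π : Perm (Fin n)) (x : GVert n) :
    tau0 π x = cond x.2 (π x.1, false) (π⁻¹ x.1, true) := rfl

def Theta (π : Perm (Fin n)) (f : Fin n → Bool) : Perm (GVert n) :=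
  Ff f * tau0 π * Ff f

lemma Theta_apply (π : Perm (Fin n)) (f : Fin n → Bool) (i : Fin n) (s : Bool) :
    Theta π f (i, s) =
      cond (xor s (f i)) (π i, f (π i)) (π⁻¹ i, !f (π⁻¹ i)) := by
  rcases hx : xor s (f i) with _ | _ <;>
    simp [Theta, Perm.mul_apply, hx]

lemma Ff_mul_Ff (f : Fin n → Bool) : Ff f * Ff f = 1 := by
  ext x <;> simp [Perm.mul_apply, Bool.xor_assoc]

lemma tau0_mul_tau0 (π : Perm (Fin n)) : tau0 π * tau0 π = 1 := by
  ext x <;> rcases x with ⟨i, _ | _⟩ <;> simp [Perm.mul_apply]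

lemma gamma_comm_Ff (f : Fin n → Bool) :
    gammaPerm n * Ff f = Ff f * gammaPerm n := by
  ext x <;> rcases x with ⟨i, s⟩ <;> simp [Perm.mul_apply] <;> cases s <;> cases f i <;> rfl

lemma isGenome_Theta (π : Perm (Fin n)) (f : Fin n → Bool) : IsGenome (Theta π f) := by
  have cancel : ∀ (g : Perm (GVert n)), g * g = 1 → ∀ z, g * (g * z) = z := by
    intro g hg z; rw [← mul_assoc, hg, one_mul]
  constructor
  · show (Ff f * tau0 π * Ff f) * (Ff f * tau0 π * Ff f) = 1
    simp only [mul_assoc]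
    rw [cancel _ (Ff_mul_Ff f), cancel _ (tau0_mul_tau0 π), Ff_mul_Ff]
  · intro x hx
    have hfix : tau0 π (Ff f x) = Ff f x := by
      have h1 : Ff f (tau0 π (Ff f x)) = x := hx
      have := congrArg (Ff f) h1
      rwa [show ∀ z, Ff f (Ff f z) = z from fun z => by
        simpa [Perm.mul_apply] using congrFun (congrArg (⇑) (Ff_mul_Ff f)) z] at this
    rcases hy : Ff f x with ⟨j, b⟩
    rw [hy] at hfix
    have := congrArg Prod.snd hfix
    cases b <;> simp at this

def sigma0 (π : Perm (Fin n)) : Perm (GVert n) := gammaPerm n * tau0 π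

lemma sigma0_apply (π : Perm (Fin n)) (i : Fin n) (b : Bool) :
    sigma0 π (i, b) = (cond b (π i) (π⁻¹ i), b) := by
  cases b <;> simp [sigma0, Perm.mul_apply]

lemma sigma0_zpow_true (π : Perm (Fin n)) (k : ℤ) (i : Fin n) :
    (sigma0 π ^ k) (i, true) = ((π ^ k) i, true) :=
  zpow_comm_apply (sigma0 π) π (fun j => (j, true)) (fun j => by simp [sigma0_apply]) k i

lemma sigma0_zpow_false (π : Perm (Fin n)) (k : ℤ) (i : Fin n) :
    (sigma0 π ^ k) (i, false) = ((π⁻¹ ^ k) i, false) :=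
  zpow_comm_apply (sigma0 π) π⁻¹ (fun j => (j, false)) (fun j => by simp [sigma0_apply]) k i

lemma sameCycle_sigma0 (π : Perm (Fin n)) (x y : GVert n) :
    (sigma0 π).SameCycle x y ↔ x.2 = y.2 ∧ π.SameCycle x.1 y.1 := by
  obtain ⟨i, b⟩ := x; obtain ⟨j, b'⟩ := y
  constructor
  · rintro ⟨k, hk⟩
    cases b
    · rw [sigma0_zpow_false, Prod.ext_iff] at hk
      refine ⟨hk.2, ⟨-k, ?_⟩⟩
      have := hk.1
      simp only [inv_zpow] at this
      rw [← this, ← zpow_neg]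
    · rw [sigma0_zpow_true, Prod.ext_iff] at hk
      exact ⟨hk.2, ⟨k, hk.1⟩⟩
  · rintro ⟨rfl, k, hk⟩
    cases b
    · exact ⟨-k, by rw [sigma0_zpow_false]; simp [inv_zpow, zpow_neg, hk]⟩
    · exact ⟨k, by rw [sigma0_zpow_true, hk]⟩

lemma orbTotal_sigma0 [Fintype (Fin n)] (π : Perm (Fin n)) :
    orbTotal (sigma0 π) = 2 * orbTotal π := by
  rw [orbTotal_eq_card_sc, orbTotal_eq_card_sc]
  have : Nat.card (Quotient (scSetoid (sigma0 π))) =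
      Nat.card (Bool × Quotient (scSetoid π)) := by
    apply Nat.card_congr
    refine ⟨Quotient.lift (fun x : GVert n => (x.2, (Quotient.mk _ x.1 : Quotient (scSetoid π))))
        (fun a b hab => ?_),
      fun p => Quotient.lift (fun i => (Quotient.mk _ ((i, p.1) : GVert n) :
        Quotient (scSetoid (sigma0 π))))
        (fun a b hab => Quotient.sound
          ((sameCycle_sigma0 π (a, p.1) (b, p.1)).2 ⟨rfl, hab⟩)) p.2, ?_, ?_⟩
    · obtain ⟨h1, h2⟩ := (sameCycle_sigma0 π a b).1 hab
      exact Prod.ext h1 (Quotient.sound h2)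
    · intro q
      induction q using Quotient.ind with
      | _ x => rfl
    · rintro ⟨b, q⟩
      induction q using Quotient.ind with
      | _ i => rfl
  rw [this, Nat.card_prod, Nat.card_eq_fintype_card (α := Bool), Fintype.card_bool]

end Genome

section Recon
variable {n : ℕ}

lemma gamma_gamma (x : GVert n) : gammaPerm n (gammaPerm n x) = x := by simp

lemma gamma_ne (x : GVert n) : gammaPerm n x ≠ x := by
  intro h
  have := congrArg Prod.snd h
  simp at this

variable (σ : Perm (GVert n))

/-- `γ σ⁻¹ = σ γ` pointwise -/
lemma hcj' (hcj : ∀ z, gammaPerm n (σ z) = σ⁻¹ (gammaPerm n z)) :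
    ∀ z, gammaPerm n (σ⁻¹ z) = σ (gammaPerm n z) := by
  intro z
  have h := hcj (σ⁻¹ z)
  rw [Perm.apply_inv_self] at h
  have h2 := congrArg σ h
  rw [Perm.apply_inv_self] at h2
  exact h2.symm

lemma no_conj (hcj : ∀ z, gammaPerm n (σ z) = σ⁻¹ (gammaPerm n z))
    (hfp : ∀ x, σ x ≠ gammaPerm n x) :
    ∀ (m : ℕ) (k : ℤ), k.natAbs ≤ m → ∀ x, (σ ^ k) x ≠ gammaPerm n x := by
  intro m
  induction m with
  | zero =>
      intro k hk x
      have hk0 : k = 0 := Int.natAbs_eq_zero.mp (Nat.le_zero.mp hk)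
      subst hk0
      simpa using fun h => gamma_ne x h.symm
  | succ m ih =>
      intro k hk x hx
      by_cases hk' : k.natAbs ≤ m
      · exact ih k hk' x hx
      have habs : k.natAbs = m + 1 := by omega
      rcases lt_trichotomy k 0 with hneg | rfl | hpos
      · by_cases h1 : k = -1
        · subst h1
          rw [zpow_neg_one] at hx
          apply hfp (σ⁻¹ x)
          rw [Perm.apply_inv_self, hcj' σ hcj, ← hx, Perm.apply_inv_self]
        · have hk2 : (k + 2).natAbs ≤ m := by omega
          apply ih (k + 2) hk2 (σ⁻¹ x)
          have h3 : gammaPerm n (σ⁻¹ x) = (σ ^ (k + 1)) x := by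
            rw [hcj' σ hcj, ← hx, ← Perm.mul_apply,
              show k + 1 = 1 + k from by ring, zpow_add, zpow_one]
          rw [h3, show k + 2 = (k + 1) + 1 from by ring, zpow_add_one,
            Perm.mul_apply, Perm.apply_inv_self]
      · exact gamma_ne x (by simpa using hx.symm)
      · by_cases h1 : k = 1
        · subst h1
          rw [zpow_one] at hx
          exact hfp x hx
        · have hk2 : (k - 2).natAbs ≤ m := by omega
          apply ih (k - 2) hk2 (σ x)
          have h3 : gammaPerm n (σ x) = (σ ^ (k - 1)) x := by
            rw [hcj, ← hx, ← Perm.mul_apply,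
              show k - 1 = -1 + k from by ring, zpow_add, zpow_neg_one]
          rw [h3, show k - 2 = (k - 1) - 1 from by ring, zpow_sub_one,
            Perm.mul_apply, Perm.inv_apply_self]

lemma not_sameCycle_gamma (hcj : ∀ z, gammaPerm n (σ z) = σ⁻¹ (gammaPerm n z))
    (hfp : ∀ x, σ x ≠ gammaPerm n x) (x : GVert n) :
    ¬ σ.SameCycle x (gammaPerm n x) := by
  rintro ⟨k, hk⟩
  exact no_conj σ hcj hfp k.natAbs k le_rfl x hk

lemma sameCycle_gamma (hcj : ∀ z, gammaPerm n (σ z) = σ⁻¹ (gammaPerm n z))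
    {x y : GVert n} (h : σ.SameCycle x y) :
    σ.SameCycle (gammaPerm n x) (gammaPerm n y) := by
  obtain ⟨k, hk⟩ := h
  refine ⟨-k, ?_⟩
  have key := zpow_comm_apply σ⁻¹ σ (⇑(gammaPerm n)) (fun z => (hcj z).symm) k x
  -- key : (σ⁻¹ ^ k) (γ x) = γ ((σ ^ k) x)
  rw [zpow_neg, ← inv_zpow, key, hk]

lemma fst_inj_of_sameCycle (hcj : ∀ z, gammaPerm n (σ z) = σ⁻¹ (gammaPerm n z))
    (hfp : ∀ x, σ x ≠ gammaPerm n x) {x y : GVert n}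
    (h : σ.SameCycle x y) (hxy : x.1 = y.1) : x = y := by
  obtain ⟨i, b⟩ := x
  obtain ⟨j, b'⟩ := y
  cases hxy
  by_cases hb : b = b'
  · rw [hb]
  · exfalso
    have : (⟨i, b'⟩ : GVert n) = gammaPerm n (i, b) := by
      cases b <;> cases b' <;> simp_all
    rw [this] at h
    exact not_sameCycle_gamma σ hcj hfp _ h

open scoped Classical in
/-- the set of genes in the cycle of `x` -/
noncomputable def genesOf (x : GVert n) : Finset (Fin n) :=
  (Finset.univ.filter (σ.SameCycle x)).image Prod.fst

lemma mem_genesOf {x : GVert n} {j : Fin n} :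
    j ∈ genesOf σ x ↔ ∃ b, σ.SameCycle x (j, b) := by
  classical
  simp only [genesOf, Finset.mem_image, Finset.mem_filter, Finset.mem_univ, true_and]
  constructor
  · rintro ⟨⟨a, b⟩, hy, rfl⟩
    exact ⟨b, hy⟩
  · rintro ⟨b, hb⟩
    exact ⟨(j, b), hb, rfl⟩

lemma genesOf_nonempty (x : GVert n) : (genesOf σ x).Nonempty :=
  ⟨x.1, mem_genesOf σ |>.2 ⟨x.2, Perm.SameCycle.refl σ x⟩⟩

lemma genesOf_eq_of_sameCycle {x y : GVert n} (h : σ.SameCycle x y) :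
    genesOf σ x = genesOf σ y := by
  ext j
  rw [mem_genesOf, mem_genesOf]
  exact ⟨fun ⟨b, hb⟩ => ⟨b, h.symm.trans hb⟩, fun ⟨b, hb⟩ => ⟨b, h.trans hb⟩⟩

lemma genesOf_gamma (hcj : ∀ z, gammaPerm n (σ z) = σ⁻¹ (gammaPerm n z)) (x : GVert n) :
    genesOf σ (gammaPerm n x) = genesOf σ x := by
  ext j
  rw [mem_genesOf, mem_genesOf]
  constructor
  · rintro ⟨b, hb⟩
    refine ⟨!b, ?_⟩
    have := sameCycle_gamma σ hcj hb
    rwa [gamma_gamma] at this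
  · rintro ⟨b, hb⟩
    exact ⟨!b, sameCycle_gamma σ hcj hb⟩

/-- minimal gene of the cycle of `x` -/
noncomputable def minGene (x : GVert n) : Fin n :=
  (genesOf σ x).min' (genesOf_nonempty σ x)

open scoped Classical in
noncomputable def fRec (i : Fin n) : Bool :=
  !(decide (σ.SameCycle (i, true) (minGene σ (i, true), true)))

end Recon

section Recon2
variable {n : ℕ} (σ : Perm (GVert n))

lemma minGene_gamma (hcj : ∀ z, gammaPerm n (σ z) = σ⁻¹ (gammaPerm n z)) (x : GVert n) : minGene σ (gammaPerm n x) = minGene σ x := by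
  unfold minGene
  congr 1
  exact genesOf_gamma σ hcj x

lemma minGene_sc {x y : GVert n} (h : σ.SameCycle x y) : minGene σ x = minGene σ y := by
  unfold minGene
  congr 1
  exact genesOf_eq_of_sameCycle σ h

lemma minGene_pair (hcj : ∀ z, gammaPerm n (σ z) = σ⁻¹ (gammaPerm n z)) (i : Fin n) (b b' : Bool) :
    minGene σ (i, b) = minGene σ (i, b') := by
  by_cases h : b = b'
  · rw [h]
  · have : (⟨i, b'⟩ : GVert n) = gammaPerm n (i, b) := by
      cases b <;> cases b' <;> simp_all
    rw [this, minGene_gamma σ hcj]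

/-- key membership lemma: `x` is on the "A side" iff it is in the same cycle
as `(minGene x, true)`. -/
lemma mem_A_iff (hcj : ∀ z, gammaPerm n (σ z) = σ⁻¹ (gammaPerm n z))
    (hfp : ∀ x, σ x ≠ gammaPerm n x) (x : GVert n) :
    (x.2 = !(fRec σ x.1)) ↔ σ.SameCycle x (minGene σ x, true) := by
  classical
  obtain ⟨i, b⟩ := x
  have hmg : minGene σ (i, b) = minGene σ (i, true) := minGene_pair σ hcj i b true
  set M := minGene σ (i, true) with hM
  rw [hmg]
  by_cases hsc : σ.SameCycle (i, true) (M, true)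
  · -- fRec i = false
    have hf : fRec σ i = false := by simp [fRec, ← hM, hsc]
    rw [hf]
    cases b
    · -- LHS false; RHS must be false
      simp only [Bool.not_false]
      constructor
      · intro h; exact absurd h (by simp)
      · intro h
        exfalso
        have h2 : σ.SameCycle (i, true) (i, false) := hsc.trans h.symm
        have : (⟨i, false⟩ : GVert n) = gammaPerm n (i, true) := rfl
        rw [this] at h2
        exact not_sameCycle_gamma σ hcj hfp _ h2
    · simpa using hsc
  · -- fRec i = true
    have hf : fRec σ i = true := by simp [fRec, ← hM, hsc]
    rw [hf]
    cases b
    · -- RHS should hold : SameCycle (i,false) (M,true)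
      simp only [Bool.not_true]
      have hMmem : M ∈ genesOf σ (i, true) := by
        rw [hM]
        exact (genesOf σ (i, true)).min'_mem (genesOf_nonempty σ (i, true))
      obtain ⟨b', hb'⟩ := (mem_genesOf σ).1 hMmem
      have hb'f : b' = false := by
        cases b'
        · rfl
        · exact absurd hb' hsc
      subst hb'f
      have h2 := sameCycle_gamma σ hcj hb'
      simpa using h2
    · -- LHS: true = !true = false, RHS: ¬ SC (i,true) (M,true)
      simp only [Bool.not_true]
      constructor
      · intro h; exact absurd h (by simp)
      · intro h; exact absurd h hsc

end Recon2

section Recon3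
variable {n : ℕ} (σ : Perm (GVert n))

lemma mem_A_sigma (hcj : ∀ z, gammaPerm n (σ z) = σ⁻¹ (gammaPerm n z))
    (hfp : ∀ x, σ x ≠ gammaPerm n x) (x : GVert n) :
    ((σ x).2 = !(fRec σ (σ x).1)) ↔ (x.2 = !(fRec σ x.1)) := by
  rw [mem_A_iff σ hcj hfp (σ x), mem_A_iff σ hcj hfp x]
  have hsc : σ.SameCycle x (σ x) := ⟨1, by simp⟩
  rw [minGene_sc σ hsc.symm]
  exact ⟨fun h => hsc.trans h, fun h => hsc.symm.trans h⟩

lemma sigma_A (hcj : ∀ z, gammaPerm n (σ z) = σ⁻¹ (gammaPerm n z))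
    (hfp : ∀ x, σ x ≠ gammaPerm n x) (i : Fin n) :
    σ (i, !fRec σ i) = ((σ (i, !fRec σ i)).1, !(fRec σ (σ (i, !fRec σ i)).1)) := by
  have h2 := (mem_A_sigma σ hcj hfp (i, !fRec σ i)).2 rfl
  exact Prod.ext rfl h2

lemma sigmaInv_A (hcj : ∀ z, gammaPerm n (σ z) = σ⁻¹ (gammaPerm n z))
    (hfp : ∀ x, σ x ≠ gammaPerm n x) (i : Fin n) :
    σ⁻¹ (i, !fRec σ i) = ((σ⁻¹ (i, !fRec σ i)).1, !(fRec σ (σ⁻¹ (i, !fRec σ i)).1)) := by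
  have key := mem_A_sigma σ hcj hfp (σ⁻¹ (i, !fRec σ i))
  rw [Perm.apply_inv_self] at key
  exact Prod.ext rfl (key.1 rfl)

/-- the permutation of genes reconstructed from `σ` -/
noncomputable def piRec (hcj : ∀ z, gammaPerm n (σ z) = σ⁻¹ (gammaPerm n z))
    (hfp : ∀ x, σ x ≠ gammaPerm n x) : Perm (Fin n) where
  toFun i := (σ (i, !fRec σ i)).1
  invFun i := (σ⁻¹ (i, !fRec σ i)).1
  left_inv i := by
    show (σ⁻¹ (((σ (i, !fRec σ i)).1), !fRec σ ((σ (i, !fRec σ i)).1))).1 = i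
    rw [← sigma_A σ hcj hfp i, Perm.inv_apply_self]
  right_inv i := by
    show (σ (((σ⁻¹ (i, !fRec σ i)).1), !fRec σ ((σ⁻¹ (i, !fRec σ i)).1))).1 = i
    rw [← sigmaInv_A σ hcj hfp i, Perm.apply_inv_self]

variable (hcj : ∀ z, gammaPerm n (σ z) = σ⁻¹ (gammaPerm n z))
    (hfp : ∀ x, σ x ≠ gammaPerm n x)

lemma piRec_apply (i : Fin n) : piRec σ hcj hfp i = (σ (i, !fRec σ i)).1 := rfl

lemma sigma_A' (i : Fin n) :
    σ (i, !fRec σ i) = (piRec σ hcj hfp i, !(fRec σ (piRec σ hcj hfp i))) :=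
  sigma_A σ hcj hfp i

lemma sigma_zpow_A (k : ℤ) (i : Fin n) :
    (σ ^ k) (i, !fRec σ i) =
      ((piRec σ hcj hfp ^ k) i, !(fRec σ ((piRec σ hcj hfp ^ k) i))) :=
  zpow_comm_apply σ (piRec σ hcj hfp) (fun j => (j, !fRec σ j))
    (fun j => sigma_A' σ hcj hfp j) k i

lemma sameCycle_piRec (i j : Fin n) :
    (piRec σ hcj hfp).SameCycle i j ↔ ∃ b, σ.SameCycle (i, !fRec σ i) (j, b) := by
  constructor
  · rintro ⟨k, hk⟩
    exact ⟨!fRec σ j, ⟨k, by rw [sigma_zpow_A σ hcj hfp, hk]⟩⟩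
  · rintro ⟨b, k, hk⟩
    rw [sigma_zpow_A σ hcj hfp] at hk
    exact ⟨k, congrArg Prod.fst hk⟩

lemma min'_congr {β : Type*} [LinearOrder β] {s t : Finset β} (h : s = t)
    (hs : s.Nonempty) (ht : t.Nonempty) : s.min' hs = t.min' ht := by subst h; rfl

open scoped Classical in
lemma minGene_eq_minRep (i : Fin n) :
    minGene σ (i, !fRec σ i) = minRep (piRec σ hcj hfp) i := by
  have hset : genesOf σ (i, !fRec σ i) =
      Finset.univ.filter ((piRec σ hcj hfp).SameCycle i) := by
    ext j
    rw [mem_genesOf, Finset.mem_filter]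
    simp only [Finset.mem_univ, true_and]
    rw [sameCycle_piRec σ hcj hfp]
  exact min'_congr hset _ _

lemma norm_fRec (i : Fin n) : fRec σ (minRep (piRec σ hcj hfp) i) = false := by
  classical
  set M := minRep (piRec σ hcj hfp) i with hM
  have hMM : minRep (piRec σ hcj hfp) M = M := by rw [hM]; exact minRep_idem _ i
  suffices h : σ.SameCycle (M, true) (minGene σ (M, true), true) by
    simp [fRec, h]
  have h1 : minGene σ (M, true) = minGene σ (M, !fRec σ M) := minGene_pair σ hcj M _ _
  rw [h1, minGene_eq_minRep σ hcj hfp M, hMM]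

end Recon3

section Glue
variable {n : ℕ}

lemma gamma_mul_gamma : gammaPerm n * gammaPerm n = 1 := by
  ext x <;> simp [Perm.mul_apply]

lemma gamma_inv : (gammaPerm n)⁻¹ = gammaPerm n :=
  inv_eq_of_mul_eq_one_left gamma_mul_gamma

lemma Ff_Ff (f : Fin n → Bool) (z : GVert n) : Ff f (Ff f z) = z := by
  simp [Bool.xor_assoc]

variable (τ : Perm (GVert n))

lemma sigmaOf_inv (hτ : IsGenome τ) : (gammaPerm n * τ)⁻¹ = τ * gammaPerm n := by
  rw [mul_inv_rev, gamma_inv]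
  congr 1
  exact inv_eq_of_mul_eq_one_left hτ.1

lemma hcj_of (hτ : IsGenome τ) :
    ∀ z, gammaPerm n ((gammaPerm n * τ) z) = (gammaPerm n * τ)⁻¹ (gammaPerm n z) := by
  intro z
  rw [sigmaOf_inv τ hτ]
  simp only [Perm.mul_apply, gamma_gamma]

lemma hfp_of (hτ : IsGenome τ) :
    ∀ x, (gammaPerm n * τ) x ≠ gammaPerm n x := by
  intro x hx
  apply hτ.2 x
  have := congrArg (gammaPerm n) hx
  rw [Perm.mul_apply, gamma_gamma, gamma_gamma] at this
  exact this

lemma tau_apply (x : GVert n) : τ x = gammaPerm n ((gammaPerm n * τ) x) := by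
  rw [Perm.mul_apply, gamma_gamma]

lemma tau_eq_Theta (hτ : IsGenome τ) :
    Theta (piRec (gammaPerm n * τ) (hcj_of τ hτ) (hfp_of τ hτ)) (fRec (gammaPerm n * τ)) = τ := by
  set σ := gammaPerm n * τ with hσ
  set f := fRec σ with hfdef
  set π := piRec σ (hcj_of τ hτ) (hfp_of τ hτ) with hπ
  have h1 : ∀ j, τ (j, !f j) = (π j, f (π j)) := by
    intro j
    rw [tau_apply τ (j, !f j), ← hσ, sigma_A' σ (hcj_of τ hτ) (hfp_of τ hτ) j, ← hπ]
    simp [hfdef]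
  have h2 : ∀ i, τ (i, f i) = (π⁻¹ i, !f (π⁻¹ i)) := by
    intro i
    have := h1 (π⁻¹ i)
    rw [Perm.apply_inv_self] at this
    have h3 := congrArg τ this
    have h4 : τ (τ (π⁻¹ i, !f (π⁻¹ i))) = (π⁻¹ i, !f (π⁻¹ i)) := by
      rw [← Perm.mul_apply, hτ.1, Perm.one_apply]
    rw [h4] at h3
    exact h3.symm
  apply Equiv.ext
  rintro ⟨i, s⟩
  rw [Theta_apply]
  cases hs : s <;> cases hfi : f i <;>
    simp only [Bool.xor_false, Bool.xor_true, Bool.not_false, Bool.not_true, cond]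
  · rw [show ((i, false) : GVert n) = (i, f i) from by rw [hfi], h2]
  · rw [show ((i, false) : GVert n) = (i, !f i) from by rw [hfi]; rfl, h1]
  · rw [show ((i, true) : GVert n) = (i, !f i) from by rw [hfi]; rfl, h1]
  · rw [show ((i, true) : GVert n) = (i, f i) from by rw [hfi], h2]

end Glue

section ThetaSide
variable {n : ℕ} (π : Perm (Fin n)) (f : Fin n → Bool)

lemma gammaTheta_eq : gammaPerm n * Theta π f = Ff f * sigma0 π * Ff f := by
  rw [Theta, sigma0, ← mul_assoc, ← mul_assoc, gamma_comm_Ff, mul_assoc (Ff f), ← mul_assoc]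

lemma gammaTheta_apply (x : GVert n) :
    (gammaPerm n * Theta π f) x = Ff f (sigma0 π (Ff f x)) := by
  rw [gammaTheta_eq]
  simp [Perm.mul_apply]

lemma Ff_gammaTheta (x : GVert n) :
    Ff f ((gammaPerm n * Theta π f) x) = sigma0 π (Ff f x) := by
  rw [gammaTheta_apply, Ff_Ff]

lemma orbTotal_gammaTheta : orbTotal (gammaPerm n * Theta π f) = 2 * orbTotal π := by
  rw [orbTotal_congr (Ff f : GVert n ≃ GVert n) (gammaPerm n * Theta π f) (sigma0 π)
    (Ff_gammaTheta π f), orbTotal_sigma0]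

lemma sameCycle_gammaTheta (x y : GVert n) :
    (gammaPerm n * Theta π f).SameCycle x y ↔
      (xor x.2 (f x.1) = xor y.2 (f y.1)) ∧ π.SameCycle x.1 y.1 := by
  rw [sameCycle_congr (Ff f : GVert n ≃ GVert n) (gammaPerm n * Theta π f) (sigma0 π)
    (Ff_gammaTheta π f), sameCycle_sigma0]
  rfl

lemma genesOf_gammaTheta (i : Fin n) (s : Bool) :
    genesOf (gammaPerm n * Theta π f) (i, s) =
      (Finset.univ.filter (π.SameCycle i) : Finset (Fin n)) := by
  classical
  ext j
  rw [mem_genesOf, Finset.mem_filter]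
  simp only [Finset.mem_univ, true_and]
  constructor
  · rintro ⟨b, hb⟩
    exact ((sameCycle_gammaTheta π f _ _).1 hb).2
  · intro h
    refine ⟨xor (xor s (f i)) (f j), (sameCycle_gammaTheta π f _ _).2 ⟨?_, h⟩⟩
    simp [Bool.xor_assoc]

lemma fRec_gammaTheta (hnorm : ∀ i, f (minRep π i) = false) :
    fRec (gammaPerm n * Theta π f) = f := by
  classical
  funext i
  set σ := gammaPerm n * Theta π f with hσ
  have hmg : minGene σ (i, true) = minRep π i := by
    unfold minGene minRep
    exact min'_congr (genesOf_gammaTheta π f i true) _ _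
  have hsc : σ.SameCycle (i, true) (minGene σ (i, true), true) ↔ f i = false := by
    rw [hmg, sameCycle_gammaTheta]
    simp only [hnorm i]
    constructor
    · rintro ⟨h1, _⟩
      cases hfi : f i
      · rfl
      · rw [hfi] at h1; simp at h1
    · intro h
      exact ⟨by simp [h], sameCycle_minRep π i⟩
  rw [show fRec σ i = !(decide (σ.SameCycle (i, true) (minGene σ (i, true), true))) from rfl]
  cases hfi : f i
  · simp [hsc.2 hfi]
  · have : ¬ σ.SameCycle (i, true) (minGene σ (i, true), true) := by
      rw [hsc, hfi]; simp
    simp [this]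

lemma piRec_gammaTheta (hnorm : ∀ i, f (minRep π i) = false) :
    piRec (gammaPerm n * Theta π f)
      (hcj_of _ (isGenome_Theta π f)) (hfp_of _ (isGenome_Theta π f)) = π := by
  apply Equiv.ext
  intro i
  rw [piRec_apply, fRec_gammaTheta π f hnorm, gammaTheta_apply]
  cases hfi : f i <;> simp [sigma0_apply, hfi]

end ThetaSide

section Main
variable {n : ℕ}

def NormPair (p : Perm (Fin n) × (Fin n → Bool)) : Prop :=
  ∀ i, p.2 (minRep p.1 i) = false

noncomputable def mainEquiv :
    {p : Perm (Fin n) × (Fin n → Bool) // NormPair p} ≃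
      {τ : Perm (GVert n) // IsGenome τ} where
  toFun p := ⟨Theta p.1.1 p.1.2, isGenome_Theta _ _⟩
  invFun t := ⟨(piRec (gammaPerm n * t.1) (hcj_of _ t.2) (hfp_of _ t.2),
      fRec (gammaPerm n * t.1)),
    fun i => norm_fRec (gammaPerm n * t.1) (hcj_of _ t.2) (hfp_of _ t.2) i⟩
  left_inv p := by
    obtain ⟨⟨π, f⟩, hp⟩ := p
    apply Subtype.ext
    have h1 := piRec_gammaTheta π f hp
    have h2 := fRec_gammaTheta π f hp
    exact Prod.ext h1 h2
  right_inv t := Subtype.ext (tau_eq_Theta t.1 t.2)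

lemma mainEquiv_orb (p : {p : Perm (Fin n) × (Fin n → Bool) // NormPair p}) :
    orbTotal (gammaPerm n * (mainEquiv p).1) = 2 * orbTotal p.1.1 :=
  orbTotal_gammaTheta p.1.1 p.1.2

theorem card_genomes_with_chromosomes_eq' :
    ∀ n h : ℕ, 1 ≤ n → 1 ≤ h → h ≤ n →
      Nat.card {τ : Equiv.Perm (GVert n) //
          IsGenome τ ∧ orbTotal (gammaPerm n * τ) = 2 * h} =
        2 ^ (n - h) * Nat.card {π : Equiv.Perm (Fin n) // orbTotal π = h} := by
  intro n h _ _ hhn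
  classical
  -- step 1 : genomes with condition ≃ normalized pairs with condition
  have e0 : {τ : Perm (GVert n) // IsGenome τ ∧ orbTotal (gammaPerm n * τ) = 2 * h} ≃
      {t : {τ : Perm (GVert n) // IsGenome τ} // orbTotal (gammaPerm n * t.1) = 2 * h} :=
    (Equiv.subtypeSubtypeEquivSubtypeInter _ _).symm
  have e1 : {p : {p : Perm (Fin n) × (Fin n → Bool) // NormPair p} //
        orbTotal p.1.1 = h} ≃
      {t : {τ : Perm (GVert n) // IsGenome τ} // orbTotal (gammaPerm n * t.1) = 2 * h} := by
    apply Equiv.subtypeEquiv mainEquiv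
    intro p
    rw [mainEquiv_orb p]
    omega
  have e2 : {p : {p : Perm (Fin n) × (Fin n → Bool) // NormPair p} //
        orbTotal p.1.1 = h} ≃
      Σ (π : {π : Perm (Fin n) // orbTotal π = h}),
        {f : Fin n → Bool // ∀ i, f (minRep π.1 i) = false} :=
    ⟨fun p => ⟨⟨p.1.1.1, p.2⟩, ⟨p.1.1.2, fun i => p.1.2 i⟩⟩,
     fun s => ⟨⟨(s.1.1, s.2.1), fun i => s.2.2 i⟩, s.1.2⟩,
     fun p => by rfl, fun s => by rfl⟩
  rw [Nat.card_congr (e0.trans e1.symm), Nat.card_congr e2]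
  -- step 2 : count the sigma type
  have hfib : ∀ (π : {π : Perm (Fin n) // orbTotal π = h}),
      Nat.card {f : Fin n → Bool // ∀ i, f (minRep π.1 i) = false} = 2 ^ (n - h) := by
    rintro ⟨π, hπ⟩
    have e3 : {f : Fin n → Bool // ∀ i, f (minRep π i) = false} ≃
        ({j : Fin n // ¬ (minRep π j = j)} → Bool) := by
      refine ⟨fun F j => F.1 j.1,
        fun g => ⟨fun i => if hme : minRep π i = i then false else g ⟨i, hme⟩, ?_⟩, ?_, ?_⟩
      · intro i
        have : minRep π (minRep π i) = minRep π i := minRep_idem π i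
        simp [this]
      · rintro ⟨F, hF⟩
        apply Subtype.ext
        funext i
        by_cases hme : minRep π i = i
        · simp only [hme, dif_pos]
          rw [← hme]
          exact (hF i).symm
        · simp [hme]
      · intro g
        funext j
        simp [j.2]
    rw [Nat.card_congr e3, Nat.card_eq_fintype_card, Fintype.card_fun]
    have hcompl : Fintype.card {j : Fin n // ¬ (minRep π j = j)} = n - h := by
      rw [Fintype.card_subtype_compl]
      have : Fintype.card {j : Fin n // minRep π j = j} = h := by
        rw [← Nat.card_eq_fintype_card, card_minRep_fixed π, hπ]
      rw [this, Fintype.card_fin]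
    rw [hcompl, Fintype.card_bool]
  rw [Nat.card_eq_fintype_card, Fintype.card_sigma]
  have : ∀ π : {π : Perm (Fin n) // orbTotal π = h},
      Fintype.card {f : Fin n → Bool // ∀ i, f (minRep π.1 i) = false} = 2 ^ (n - h) := by
    intro π
    rw [← Nat.card_eq_fintype_card]
    exact hfib π
  rw [Finset.sum_congr rfl (fun π _ => this π), Finset.sum_const, Finset.card_univ,
    smul_eq_mul, Nat.card_eq_fintype_card, mul_comm]

end Main

/-- For all `n ≥ 1` and `1 ≤ h ≤ n`, the number of fixed-point-free involutions `τ` of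
`Vₙ` such that `γₙ∘τ` has exactly `2h` orbits (i.e. the number of multichromosomal signed
circular genomes on `n` genes with exactly `h` chromosomes) equals `2^{n-h}` times the
number of permutations of an `n`-element set with exactly `h` orbits (the unsigned
Stirling number of the first kind). -/
theorem card_genomes_with_chromosomes_eq :
    ∀ n h : ℕ, 1 ≤ n → 1 ≤ h → h ≤ n →
      Nat.card {τ : Equiv.Perm (GVert n) //
          IsGenome τ ∧ orbTotal (gammaPerm n * τ) = 2 * h} =
        2 ^ (n - h) * Nat.card {π : Equiv.Perm (Fin n) // orbTotal π = h} := by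
  exact card_genomes_with_chromosomes_eq'
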